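/- arXiv:2002.04789 — 3 statements merged into one kernel-verified Lean document; each statement's English description precedes it below -/
import Mathlib

section
/- Let V, U be isotropic m-dimensional subspaces of R^{2n} with U⊥ ∩ V = {0} (so that the Euclidean orthogonal projection π_{V⊥} restricted to U⊥ is injective), and let u ∈ U. Then the right-coset projection P_{V⊥} restricted to the right coset 𝕌⊥*(u,0) = {(w,s)*(u,0) : w ∈ U⊥, s ∈ R} is injective, and it is a bijection onto 𝕍⊥. -/
open scoped RealInnerProductSpace
open Module
noncomputable section

/-- `ℝ^{2n}` with Euclidean norm, coordinates paired as `(j,0) ↔ x_j`, `(j,1) ↔ y_j`. -/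
abbrev Z (n : ℕ) := EuclideanSpace ℝ (Fin n × Fin 2)

/-- the standard symplectic form -/
def symp {n : ℕ} (z w : Z n) : ℝ := ∑ j : Fin n, (z (j, 0) * w (j, 1) - z (j, 1) * w (j, 0))

/-- the Heisenberg group as a set -/
abbrev H (n : ℕ) := Z n × ℝ

/-- Heisenberg group law -/
def Hmul {n : ℕ} (p q : H n) : H n := (p.1 + q.1, p.2 + q.2 + symp p.1 q.1 / 2)

/-- Heisenberg inverse -/
def Hinv {n : ℕ} (p : H n) : H n := (-p.1, -p.2)

/-- Korányi norm -/
def Knorm {n : ℕ} (p : H n) : ℝ := (‖p.1‖ ^ 4 + 16 * p.2 ^ 2) ^ ((1 : ℝ)/4)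

/-- Korányi metric -/
def dK {n : ℕ} (p q : H n) : ℝ := Knorm (Hmul (Hinv q) p)

/-- Euclidean orthogonal projection onto `V`, as a map `Z n → Z n` -/
def projV {n : ℕ} (V : Submodule ℝ (Z n)) (z : Z n) : Z n := (V.orthogonalProjectionOnto z : Z n)

/-- `V` is isotropic when the symplectic form vanishes identically on it. -/
def Isotropic {n : ℕ} (V : Submodule ℝ (Z n)) : Prop :=
  ∀ a ∈ V, ∀ b ∈ V, symp a b = 0

/-- horizontal projection `P_𝕍` -/
def PV {n : ℕ} (V : Submodule ℝ (Z n)) (p : H n) : H n := (projV V p.1, 0)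

/-- right-coset vertical projection `P_{V⊥}^R (p) = P_𝕍(p)⁻¹ * p` -/
def PR {n : ℕ} (V : Submodule ℝ (Z n)) (p : H n) : H n := Hmul (Hinv (PV V p)) p

/-- the quotient distance on `𝕍⊥`, `d_{V\Hⁿ}(p,q) = inf_{g ∈ 𝕍} d(g*p, q)` -/
def dQ {n : ℕ} (V : Submodule ℝ (Z n)) (p q : H n) : ℝ :=
  ⨅ w : V, dK (Hmul ((w : Z n), 0) p) q

/-- Euclidean distance on `Hⁿ = ℝ^{2n} × ℝ` -/
def dE {n : ℕ} (p q : H n) : ℝ := Real.sqrt (‖p.1 - q.1‖ ^ 2 + (p.2 - q.2) ^ 2)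


/-- right-coset vertical projection, explicit formula
`P_{V⊥}(z,t) = (π_{V⊥}(z), t − ½ω(π_V(z), π_{V⊥}(z)))` -/
def PRf {n : ℕ} (V : Submodule ℝ (Z n)) (p : H n) : H n :=
  (projV Vᗮ p.1, p.2 - symp (projV V p.1) (projV Vᗮ p.1) / 2)


section Aux
variable {n : ℕ}

lemma projV_add (W : Submodule ℝ (Z n)) (a b : Z n) :
    projV W (a + b) = projV W a + projV W b := by
  simp [projV, map_add]

lemma projV_sub (W : Submodule ℝ (Z n)) (a b : Z n) :
    projV W (a - b) = projV W a - projV W b := by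
  simp [projV, map_sub]

lemma projV_mem (W : Submodule ℝ (Z n)) (a : Z n) : projV W a ∈ W :=
  (W.orthogonalProjectionOnto a).2

lemma projV_eq_zero_iff (W : Submodule ℝ (Z n)) (a : Z n) :
    projV W a = 0 ↔ a ∈ Wᗮ := by
  constructor
  · intro h
    have h0 : W.orthogonalProjectionOnto a = 0 := Subtype.ext h
    exact Submodule.orthogonalProjectionOnto_eq_zero_iff.mp h0
  · intro h
    have : W.orthogonalProjectionOnto a = 0 := Submodule.orthogonalProjectionOnto_eq_zero_iff.mpr h
    simpa [projV] using congrArg (Subtype.val) this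

end Aux

/-- If `V, U` are isotropic `m`-dimensional subspaces with `U⊥ ∩ V = {0}`,
then the Euclidean projection `π_{V⊥}` is injective on `U⊥`, and the right-coset projection
`P_{V⊥}` restricted to the right coset `𝕌⊥ * (u,0)` is a bijection onto `𝕍⊥`. -/
theorem PR_bijOn_coset {n m : ℕ} (V U : Submodule ℝ (Z n))
    (hV : Isotropic V) (hU : Isotropic U)
    (hVm : Module.finrank ℝ V = m) (hUm : Module.finrank ℝ U = m)
    (htrans : Uᗮ ⊓ V = ⊥) (u : Z n) (hu : u ∈ U) :
    Set.InjOn (projV Vᗮ) (Uᗮ : Set (Z n)) ∧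
    Set.BijOn (PRf V) {p : H n | ∃ w ∈ Uᗮ, ∃ s : ℝ, p = Hmul (w, s) (u, 0)}
      {p : H n | p.1 ∈ Vᗮ} := by
  classical
  have hker : ∀ a : Z n, projV Vᗮ a = 0 ↔ a ∈ V := by
    intro a
    rw [projV_eq_zero_iff, Submodule.orthogonal_orthogonal]
  -- injectivity on Uᗮ
  have hinj : Set.InjOn (projV Vᗮ) (Uᗮ : Set (Z n)) := by
    intro a ha b hb hab
    have hd : projV Vᗮ (a - b) = 0 := by rw [projV_sub, hab, sub_self]
    have hdV : a - b ∈ V := (hker _).mp hd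
    have : a - b ∈ Uᗮ ⊓ V := ⟨Uᗮ.sub_mem ha hb, hdV⟩
    rw [htrans, Submodule.mem_bot] at this
    exact sub_eq_zero.mp this
  refine ⟨hinj, ?_, ?_, ?_⟩
  · -- MapsTo
    rintro p ⟨w, hw, s, rfl⟩
    show (PRf V _).1 ∈ Vᗮ
    exact projV_mem _ _
  · -- InjOn
    rintro p ⟨w, hw, s, rfl⟩ q ⟨w', hw', s', rfl⟩ hpq
    have h1 : projV Vᗮ (w + u) = projV Vᗮ (w' + u) := congrArg Prod.fst hpq
    have hww' : projV Vᗮ w = projV Vᗮ w' := by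
      have := congrArg (fun z => z - projV Vᗮ u) h1
      simpa [projV_add] using this
    have hw0 : w = w' := hinj hw hw' hww'
    subst hw0
    have h2 := congrArg Prod.snd hpq
    simp only [PRf, Hmul] at h2 ⊢
    have : s = s' := by
      field_simp at h2
      linarith
    simp [Hmul, this]
  · -- SurjOn
    -- linear map from Uᗮ to Vᗮ
    set f : (Uᗮ : Submodule ℝ (Z n)) →ₗ[ℝ] (Vᗮ : Submodule ℝ (Z n)) :=
      (Vᗮ.orthogonalProjectionOnto).toLinearMap.comp (Uᗮ.subtype) with hf
    have hfinj : Function.Injective f := by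
      intro a b hab
      apply Subtype.ext
      apply hinj a.2 b.2
      have := congrArg Subtype.val hab
      simpa [hf, projV] using this
    have hrank : finrank ℝ (Uᗮ : Submodule ℝ (Z n)) = finrank ℝ (Vᗮ : Submodule ℝ (Z n)) := by
      have h1 := Submodule.finrank_add_finrank_orthogonal (K := U)
      have h2 := Submodule.finrank_add_finrank_orthogonal (K := V)
      omega
    have hfsurj : Function.Surjective f :=
      (LinearMap.injective_iff_surjective_of_finrank_eq_finrank hrank).mp hfinj
    rintro q hq
    -- find w with projV Vᗮ w = q.1 - projV Vᗮ u
    have hmemt : q.1 - projV Vᗮ u ∈ Vᗮ := Vᗮ.sub_mem hq (projV_mem _ _)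
    obtain ⟨⟨w, hw⟩, hweq⟩ := hfsurj ⟨q.1 - projV Vᗮ u, hmemt⟩
    have hweq' : projV Vᗮ w = q.1 - projV Vᗮ u := by
      simpa [projV, hf] using congrArg Subtype.val hweq
    have hz : projV Vᗮ (w + u) = q.1 := by
      rw [projV_add, hweq']; abel
    refine ⟨Hmul (w, q.2 + symp (projV V (w + u)) (projV Vᗮ (w + u)) / 2 - symp w u / 2) (u, 0),
      ⟨w, hw, _, rfl⟩, ?_⟩
    simp only [PRf, Hmul]
    refine Prod.ext ?_ ?_
    · simpa using hz
    · simp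
end
end

section
/- Let A = {s ∈ R : |s| ≤ 1/4} and let V be an isotropic subspace with a vector w₀ ∈ V, |w₀| ≤ 1, |ω(e₁,w₀)| > 1/2. Then for all s, t ∈ A, the quotient distance between the projections of (e₁,s) and (e₁,t) is comparable to |s−t|: c|s−t| ≤ inf_{w∈V} ( |w|⁴ + |s−t+ω(w,e₁)|² )^{1/4} ≤ C|s−t|, where c, C > 0 are absolute constants. -/
open scoped RealInnerProductSpace
open Module
noncomputable section

lemma symp_smul' {n : ℕ} (c : ℝ) (z w : Z n) : symp (c • z) w = c * symp z w := by
  unfold symp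
  rw [Finset.mul_sum]
  refine Finset.sum_congr rfl fun j _ => ?_
  simp; ring

lemma symp_skew' {n : ℕ} (z w : Z n) : symp z w = - symp w z := by
  unfold symp
  rw [← Finset.sum_neg_distrib]
  exact Finset.sum_congr rfl fun j _ => by ring

lemma abs_symp_le' {n : ℕ} (z w : Z n) : |symp z w| ≤ ‖z‖ * ‖w‖ := by
  set J : Z n := (WithLp.equiv 2 _).symm (fun p => if p.2 = 0 then -z (p.1, 1) else z (p.1, 0)) with hJ
  have h1 : (inner ℝ J w : ℝ) = symp z w := by
    rw [PiLp.inner_apply]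
    unfold symp
    rw [Fintype.sum_prod_type]
    refine Finset.sum_congr rfl fun j _ => ?_
    rw [Fin.sum_univ_two]
    simp [J]
    ring
  have h2 : ‖J‖ = ‖z‖ := by
    rw [EuclideanSpace.norm_eq, EuclideanSpace.norm_eq]
    congr 1
    rw [Fintype.sum_prod_type, Fintype.sum_prod_type]
    refine Finset.sum_congr rfl fun j _ => ?_
    rw [Fin.sum_univ_two, Fin.sum_univ_two]
    simp [J]
    ring
  calc |symp z w| = |(inner ℝ J w : ℝ)| := by rw [h1]
    _ ≤ ‖J‖ * ‖w‖ := abs_real_inner_le_norm J w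
    _ = ‖z‖ * ‖w‖ := by rw [h2]

lemma rpow_pow4' (x : ℝ) (hx : 0 ≤ x) : (x ^ 4) ^ ((1:ℝ)/4) = x := by
  rw [← Real.rpow_natCast x 4, ← Real.rpow_mul hx]; norm_num

lemma rpow_sq4' (x : ℝ) (hx : 0 ≤ x) : (x ^ 2) ^ ((1:ℝ)/4) = Real.sqrt x := by
  rw [← Real.rpow_natCast x 2, ← Real.rpow_mul hx, Real.sqrt_eq_rpow]; norm_num

/-- There are absolute constants `c, C > 0` such that: whenever `e₁` is a
unit vector, `V` an isotropic subspace containing some `w₀` with `|w₀| ≤ 1` and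
`|ω(e₁,w₀)| > 1/2`, and `s, t ∈ [−1/4, 1/4]`, the quotient-distance expression satisfies
`c|s−t| ≤ inf_{w∈V} (|w|⁴ + |s−t+ω(w,e₁)|²)^{1/4} ≤ C|s−t|`. -/
theorem quotient_distance_vertical_line_comparable :
    ∃ c C : ℝ, 0 < c ∧ 0 < C ∧
      ∀ (n : ℕ) (e₁ : Z n), ‖e₁‖ = 1 →
        ∀ (V : Submodule ℝ (Z n)), Isotropic V →
          ∀ w₀ ∈ V, ‖w₀‖ ≤ 1 → 1/2 < |symp e₁ w₀| →
            ∀ s ∈ Set.Icc (-(1:ℝ)/4) (1/4), ∀ t ∈ Set.Icc (-(1:ℝ)/4) (1/4),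
              c * |s - t| ≤
                  (⨅ w : V, (‖(w : Z n)‖ ^ 4 + |s - t + symp (w : Z n) e₁| ^ 2)
                    ^ ((1 : ℝ)/4)) ∧
                (⨅ w : V, (‖(w : Z n)‖ ^ 4 + |s - t + symp (w : Z n) e₁| ^ 2)
                    ^ ((1 : ℝ)/4)) ≤ C * |s - t| := by
  
  refine ⟨1/4, 2, by norm_num, by norm_num, ?_⟩
  intro n e₁ he V _ w₀ hw₀V hw₀n hw₀s s hs t ht
  set δ := s - t with hδdef
  set f : V → ℝ := fun w =>
    (‖(w : Z n)‖ ^ 4 + |δ + symp (w : Z n) e₁| ^ 2) ^ ((1:ℝ)/4) with hf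
  have hf0 : ∀ w : V, 0 ≤ f w := fun w => Real.rpow_nonneg (by positivity) _
  have hbdd : BddBelow (Set.range f) := by
    refine ⟨0, ?_⟩
    rintro x ⟨w, rfl⟩
    exact hf0 w
  have hδle : |δ| ≤ 1/2 := by
    rw [abs_le]
    obtain ⟨h1, h2⟩ := hs; obtain ⟨h3, h4⟩ := ht
    constructor <;> [linarith; linarith]
  constructor
  · -- lower bound
    refine le_ciInf fun w => ?_
    rcases le_or_gt (|δ|/4) ‖(w : Z n)‖ with h | h
    · have h1 : (‖(w : Z n)‖ ^ 4) ^ ((1:ℝ)/4) ≤ f w := by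
        apply Real.rpow_le_rpow (by positivity)
          (le_add_of_nonneg_right (by positivity)) (by norm_num)
      rw [rpow_pow4' _ (norm_nonneg _)] at h1
      calc 1/4 * |δ| ≤ ‖(w : Z n)‖ := by linarith
        _ ≤ f w := h1
    · have hsy : |symp (w : Z n) e₁| ≤ ‖(w : Z n)‖ := by
        have := abs_symp_le' (w : Z n) e₁
        rwa [he, mul_one] at this
      have key : |δ| - ‖(w : Z n)‖ ≤ |δ + symp (w : Z n) e₁| := by
        have h1 := abs_add_le (δ + symp (w : Z n) e₁) (-(symp (w : Z n) e₁))
        simp only [add_neg_cancel_right, abs_neg] at h1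
        linarith
      set a := |δ + symp (w : Z n) e₁| with ha
      have h2 : (a ^ 2) ^ ((1:ℝ)/4) ≤ f w := by
        apply Real.rpow_le_rpow (by positivity)
          (le_add_of_nonneg_left (by positivity)) (by norm_num)
      rw [rpow_sq4' _ (abs_nonneg _)] at h2
      have h3 : 1/4 * |δ| ≤ Real.sqrt a := by
        rw [show (1:ℝ)/4 * |δ| = |δ|/4 by ring, Real.le_sqrt (by positivity) (abs_nonneg _)]
        nlinarith [abs_nonneg δ]
      linarith
  · -- upper bound
    have hse : symp w₀ e₁ ≠ 0 := by
      rw [symp_skew']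
      intro hc
      rw [neg_eq_zero] at hc
      rw [hc] at hw₀s
      simp at hw₀s
      linarith
    set lam := -δ / symp w₀ e₁ with hlam
    have hmem : lam • w₀ ∈ V := V.smul_mem lam hw₀V
    have hle := ciInf_le hbdd (⟨lam • w₀, hmem⟩ : V)
    have hval : f ⟨lam • w₀, hmem⟩ = ‖lam • w₀‖ := by
      have hsymp : symp (lam • w₀) e₁ = -δ := by
        rw [symp_smul', hlam, div_mul_cancel₀ _ hse]
      rw [hf]
      simp only [hsymp, add_neg_cancel, abs_zero]
      norm_num
      exact rpow_pow4' _ (norm_nonneg _)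
    rw [hval] at hle
    have hnorm : ‖lam • w₀‖ ≤ 2 * |δ| := by
      rw [norm_smul]
      have h1 : ‖lam‖ ≤ 2 * |δ| := by
        rw [hlam, Real.norm_eq_abs, abs_div, abs_neg]
        rw [div_le_iff₀ (by positivity : (0:ℝ) < |symp w₀ e₁|)]
        have : |symp w₀ e₁| = |symp e₁ w₀| := by rw [symp_skew' w₀ e₁, abs_neg]
        nlinarith [abs_nonneg δ]
      calc ‖lam‖ * ‖w₀‖ ≤ ‖lam‖ * 1 :=
          mul_le_mul_of_nonneg_left hw₀n (norm_nonneg _)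
        _ = ‖lam‖ := mul_one _
        _ ≤ 2 * |δ| := h1
    linarith
end
end

section
/- Let μ be a finite Borel measure on R^{2n}×R supported in B(0,1) with μ(B_E(p,r)) ≤ r^σ for all p, r, where m+1 < σ, and let m+1 < s < σ. Then ∫ ( |ζ|² + τ² )^{(m−s)/2} |ζ|^{−m} dμ(ζ,τ) < ∞. -/
open scoped RealInnerProductSpace
open Module
noncomputable section

open MeasureTheory ENNReal

lemma exists_dyadic_aux {x : ℝ} (hx : 0 < x) {j : ℕ} (hxj : x ≤ (2⁻¹:ℝ)^j) :
    ∃ i : ℕ, (2⁻¹:ℝ)^(j+i+1) < x ∧ x ≤ (2⁻¹:ℝ)^(j+i) := by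
  classical
  obtain ⟨N, hN⟩ := exists_pow_lt_of_lt_one hx (by norm_num : (2⁻¹:ℝ) < 1)
  have hP : ∃ k, (2⁻¹:ℝ)^k < x := ⟨N, hN⟩
  have hn₀ : (2⁻¹:ℝ)^(Nat.find hP) < x := Nat.find_spec hP
  have hjlt : j < Nat.find hP := by
    by_contra h
    push_neg at h
    have : (2⁻¹:ℝ)^j ≤ (2⁻¹:ℝ)^(Nat.find hP) :=
      pow_le_pow_of_le_one (by norm_num) (by norm_num) h
    linarith
  refine ⟨Nat.find hP - j - 1, ?_, ?_⟩
  · have : j + (Nat.find hP - j - 1) + 1 = Nat.find hP := by omega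
    rw [this]; exact hn₀
  · have hlt : j + (Nat.find hP - j - 1) < Nat.find hP := by omega
    have := Nat.find_min hP hlt
    push_neg at this
    exact this

lemma two_rpow_mul_two_rpow (a b : ℝ) : (2:ℝ)^a * (2:ℝ)^b = (2:ℝ)^(a+b) :=
  (Real.rpow_add (by norm_num) a b).symm

lemma two_rpow_rpow (a b : ℝ) : ((2:ℝ)^a)^b = (2:ℝ)^(a*b) :=
  (Real.rpow_mul (by norm_num) a b).symm

lemma two_rpow_npow (a : ℝ) (k : ℕ) : ((2:ℝ)^a)^k = (2:ℝ)^(a*k) := by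
  rw [← Real.rpow_natCast ((2:ℝ)^a) k, two_rpow_rpow]

lemma two_mul_two_rpow (a : ℝ) : 2 * (2:ℝ)^a = (2:ℝ)^(1+a) := by
  rw [Real.rpow_add (by norm_num), Real.rpow_one]

lemma two_npow_eq (k : ℕ) : ((2:ℝ)^k : ℝ) = (2:ℝ)^(k:ℝ) :=
  (Real.rpow_natCast 2 k).symm

lemma half_pow_eq (k : ℕ) : ((2⁻¹:ℝ))^k = (2:ℝ)^(-(k:ℝ)) := by
  rw [Real.rpow_neg (by norm_num), Real.rpow_natCast, inv_pow]


/-- If `μ` is a finite Borel measure on `ℝ^{2n}×ℝ` supported in `B(0,1)`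
with Frostman exponent `σ`, and `m+1 < s < σ`, then
`∫ (|ζ|² + τ²)^{(m−s)/2} |ζ|^{−m} dμ(ζ,τ) < ∞`
(the integrand being `+∞` at points where the relevant base vanishes). -/
theorem mixed_kernel_integrable {n : ℕ} (m : ℕ) (hm : 1 ≤ m) (σ s : ℝ)
    (hσ : (m : ℝ) + 1 < σ) (hs : (m : ℝ) + 1 < s) (hsσ : s < σ)
    (μ : Measure (H n)) [IsFiniteMeasure μ]
    (hsupp : μ {q : H n | 1 < dE q 0} = 0)
    (hfrost : ∀ (p : H n) (r : ℝ), 0 < r → μ {q : H n | dE q p ≤ r} ≤ ENNReal.ofReal (r ^ σ)) :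
    ∫⁻ q : H n, (ENNReal.ofReal (‖q.1‖ ^ 2 + q.2 ^ 2)) ^ (((m : ℝ) - s) / 2)
        * (ENNReal.ofReal ‖q.1‖) ^ (-(m : ℝ)) ∂μ < ⊤ := by
  classical
  set f : H n → ℝ≥0∞ := fun q =>
    (ENNReal.ofReal (‖q.1‖ ^ 2 + q.2 ^ 2)) ^ (((m : ℝ) - s) / 2)
        * (ENNReal.ofReal ‖q.1‖) ^ (-(m : ℝ)) with hf
  set nq : H n → ℝ := fun q => Real.sqrt (‖q.1‖ ^ 2 + q.2 ^ 2) with hnq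
  have hnq_nonneg : ∀ q, 0 ≤ nq q := fun q => Real.sqrt_nonneg _
  have hnq_sq : ∀ q : H n, nq q ^ 2 = ‖q.1‖ ^ 2 + q.2 ^ 2 := fun q =>
    Real.sq_sqrt (by positivity)
  have hdE0 : ∀ q : H n, dE q 0 = nq q := by
    intro q
    simp [dE, hnq]
  have hζ_le : ∀ q : H n, ‖q.1‖ ≤ nq q := by
    intro q
    rw [hnq]
    simpa [Real.sqrt_sq (norm_nonneg q.1)] using
      Real.sqrt_le_sqrt (by nlinarith [sq_nonneg q.2] : ‖q.1‖^2 ≤ ‖q.1‖^2 + q.2^2)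
  have hτ_le : ∀ q : H n, |q.2| ≤ nq q := by
    intro q
    rw [hnq]
    simpa [Real.sqrt_sq_eq_abs] using
      Real.sqrt_le_sqrt (by nlinarith [sq_nonneg ‖q.1‖] : q.2^2 ≤ ‖q.1‖^2 + q.2^2)
  set r : ℕ → ℝ := fun k => (2⁻¹:ℝ) ^ k with hr
  have hrpos : ∀ k, 0 < r k := fun k => by positivity
  have hrw : ∀ k, r k = (2:ℝ)^(-(k:ℝ)) := fun k => half_pow_eq k
  -- the dyadic sets
  set A : ℕ → ℕ → Set (H n) := fun i j =>
    {q | r (j+i+1) < ‖q.1‖ ∧ ‖q.1‖ ≤ r (j+i) ∧ r (j+1) < nq q ∧ nq q ≤ r j} with hA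
  have hnq_meas : Measurable nq :=
    (Real.continuous_sqrt.comp (((continuous_fst.norm.pow 2)).add (continuous_snd.pow 2))).measurable
  have hζ_meas : Measurable fun q : H n => ‖q.1‖ := continuous_fst.norm.measurable
  have hAmeas : ∀ i j, MeasurableSet (A i j) := by
    intro i j
    rw [hA]
    simp only [Set.setOf_and]
    exact (measurableSet_lt measurable_const hζ_meas).inter
      ((measurableSet_le hζ_meas measurable_const).inter
      ((measurableSet_lt measurable_const hnq_meas).inter
      (measurableSet_le hnq_meas measurable_const)))
  -- covering lemma
  have cover : ∀ ρ R : ℝ, 0 < ρ → 0 < R →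
      μ {q : H n | ‖q.1‖ ≤ ρ ∧ |q.2| ≤ R} ≤ (⌊2*R/ρ⌋₊ + 1 : ℕ) * ENNReal.ofReal ((2*ρ)^σ) := by
    intro ρ R hρ hR
    set N := ⌊2*R/ρ⌋₊ + 1 with hN
    have hsub : {q : H n | ‖q.1‖ ≤ ρ ∧ |q.2| ≤ R} ⊆
        ⋃ k ∈ Finset.range N, {q : H n | dE q (0, -R + k*ρ + ρ/2) ≤ 2*ρ} := by
      intro q hq
      obtain ⟨h1, h2⟩ := hq
      have hτ1 : -R ≤ q.2 := neg_le_of_abs_le h2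
      have hτ2 : q.2 ≤ R := le_of_abs_le h2
      set k := ⌊(q.2 + R)/ρ⌋₊ with hk
      have hnn : 0 ≤ (q.2 + R)/ρ := div_nonneg (by linarith) hρ.le
      have hk1 : (k:ℝ) * ρ ≤ q.2 + R := by
        have h' := Nat.floor_le hnn
        rw [← hk] at h'
        calc (k:ℝ) * ρ ≤ ((q.2 + R)/ρ) * ρ := mul_le_mul_of_nonneg_right h' hρ.le
          _ = q.2 + R := by field_simp
      have hk2 : q.2 + R < ((k:ℝ)+1) * ρ := by
        have h' := Nat.lt_floor_add_one ((q.2 + R)/ρ)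
        rw [← hk] at h'
        calc q.2 + R = ((q.2 + R)/ρ) * ρ := by field_simp
          _ < ((k:ℝ)+1) * ρ := mul_lt_mul_of_pos_right h' hρ
      have hkmem : k ∈ Finset.range N := by
        refine Finset.mem_range.mpr (Nat.lt_succ_of_le ?_)
        refine Nat.floor_mono ?_
        gcongr
        linarith
      refine Set.mem_biUnion hkmem ?_
      show dE q (0, -R + (k:ℝ)*ρ + ρ/2) ≤ 2*ρ
      have habs : (q.2 - (-R + (k:ℝ)*ρ + ρ/2))^2 ≤ ρ^2 := by nlinarith
      have hb : ‖q.1 - (0 : EuclideanSpace ℝ (Fin n × Fin 2))‖^2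
          + (q.2 - (-R + (k:ℝ)*ρ + ρ/2))^2 ≤ (2*ρ)^2 := by
        rw [sub_zero]
        nlinarith [norm_nonneg q.1]
      calc dE q (0, -R + (k:ℝ)*ρ + ρ/2)
          ≤ Real.sqrt ((2*ρ)^2) := Real.sqrt_le_sqrt hb
        _ = 2*ρ := Real.sqrt_sq (by positivity)
    calc μ {q : H n | ‖q.1‖ ≤ ρ ∧ |q.2| ≤ R}
        ≤ μ (⋃ k ∈ Finset.range N, {q : H n | dE q (0, -R + k*ρ + ρ/2) ≤ 2*ρ}) :=
          measure_mono hsub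
      _ ≤ ∑ k ∈ Finset.range N, μ {q : H n | dE q (0, -R + k*ρ + ρ/2) ≤ 2*ρ} :=
          measure_biUnion_finset_le _ _
      _ ≤ ∑ _k ∈ Finset.range N, ENNReal.ofReal ((2*ρ)^σ) :=
          Finset.sum_le_sum fun k _ => hfrost _ _ (by positivity)
      _ = (N : ℝ≥0∞) * ENNReal.ofReal ((2*ρ)^σ) := by
          rw [Finset.sum_const, Finset.card_range, nsmul_eq_mul]
  -- cylinder bound
  have hcyl : ∀ i j : ℕ, μ {q : H n | ‖q.1‖ ≤ r (j+i) ∧ |q.2| ≤ r j} ≤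
      ENNReal.ofReal (2^(i+2) * (2 * r (j+i))^σ) := by
    intro i j
    refine (cover (r (j+i)) (r j) (hrpos _) (hrpos _)).trans ?_
    have hdiv : 2 * r j / r (j+i) = ((2^(i+1) : ℕ) : ℝ) := by
      rw [div_eq_iff (ne_of_gt (hrpos _)), hr]
      push_cast
      rw [pow_add, inv_pow, inv_pow]
      field_simp
      ring
    rw [hdiv, Nat.floor_natCast]
    rw [ENNReal.ofReal_mul (by positivity)]
    refine mul_le_mul' ?_ le_rfl
    rw [← ENNReal.ofReal_natCast]
    apply ENNReal.ofReal_le_ofReal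
    push_cast
    have h2 : (0:ℝ) < 2^(i+1) := by positivity
    have h1 : (1:ℝ) ≤ 2^(i+1) := one_le_pow₀ (by norm_num)
    calc (2:ℝ)^(i+1) + 1 ≤ 2^(i+1) + 2^(i+1) := by linarith
      _ = 2^(i+2) := by ring
  have hAsub : ∀ i j, A i j ⊆ {q : H n | ‖q.1‖ ≤ r (j+i) ∧ |q.2| ≤ r j} := by
    intro i j q hq
    exact ⟨hq.2.1, (hτ_le q).trans hq.2.2.2⟩
  -- the per-piece integral bound
  have key : ∀ i j : ℕ, ∫⁻ q in A i j, f q ∂μ ≤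
      ENNReal.ofReal (2^(s+σ+2) * ((2:ℝ)^((m:ℝ)+1-σ))^i * ((2:ℝ)^(s-σ))^j) := by
    intro i j
    set C : ℝ≥0∞ := ENNReal.ofReal ((r (j+1))^((m:ℝ)-s) * (r (j+i+1))^(-(m:ℝ))) with hC
    have hfb : ∀ q ∈ A i j, f q ≤ C := by
      intro q hq
      obtain ⟨h1, h2, h3, h4⟩ := hq
      have hnqpos : 0 < nq q := (hrpos _).trans h3
      have hζpos : 0 < ‖q.1‖ := (hrpos _).trans h1
      have e1 : ENNReal.ofReal (‖q.1‖^2 + q.2^2) ^ (((m:ℝ)-s)/2)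
          = ENNReal.ofReal ((nq q)^((m:ℝ)-s)) := by
        rw [← hnq_sq q, ENNReal.ofReal_rpow_of_pos (by positivity)]
        congr 1
        rw [← Real.rpow_natCast (nq q) 2, ← Real.rpow_mul (hnq_nonneg q)]
        congr 1
        push_cast
        ring
      have e2 : ENNReal.ofReal ‖q.1‖ ^ (-(m:ℝ)) = ENNReal.ofReal (‖q.1‖^(-(m:ℝ))) :=
        ENNReal.ofReal_rpow_of_pos hζpos
      rw [hf]
      dsimp only
      rw [e1, e2, ← ENNReal.ofReal_mul (by positivity), hC]
      apply ENNReal.ofReal_le_ofReal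
      have b1 : (nq q)^((m:ℝ)-s) ≤ (r (j+1))^((m:ℝ)-s) :=
        Real.rpow_le_rpow_of_nonpos (hrpos _) h3.le (by linarith)
      have b2 : ‖q.1‖^(-(m:ℝ)) ≤ (r (j+i+1))^(-(m:ℝ)) :=
        Real.rpow_le_rpow_of_nonpos (hrpos _) h1.le (by simp)
      exact mul_le_mul b1 b2 (Real.rpow_nonneg (norm_nonneg _) _)
        (Real.rpow_nonneg (hrpos _).le _)
    have realcomp : (r (j+1))^((m:ℝ)-s) * (r (j+i+1))^(-(m:ℝ)) * (2^(i+2) * (2 * r (j+i))^σ)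
        = 2^(s+σ+2) * ((2:ℝ)^((m:ℝ)+1-σ))^i * ((2:ℝ)^(s-σ))^j := by
      simp only [hrw, two_npow_eq, two_mul_two_rpow, two_rpow_rpow, two_rpow_npow,
        two_rpow_mul_two_rpow]
      congr 1
      push_cast
      ring
    calc ∫⁻ q in A i j, f q ∂μ
        ≤ ∫⁻ _ in A i j, C ∂μ := setLIntegral_mono' (hAmeas i j) hfb
      _ = C * μ (A i j) := by rw [lintegral_const, Measure.restrict_apply_univ]
      _ ≤ C * ENNReal.ofReal (2^(i+2) * (2 * r (j+i))^σ) :=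
          mul_le_mul' le_rfl ((measure_mono (hAsub i j)).trans (hcyl i j))
      _ = ENNReal.ofReal ((r (j+1))^((m:ℝ)-s) * (r (j+i+1))^(-(m:ℝ))
            * (2^(i+2) * (2 * r (j+i))^σ)) := by
          rw [hC, ← ENNReal.ofReal_mul (by positivity)]
      _ = ENNReal.ofReal (2^(s+σ+2) * ((2:ℝ)^((m:ℝ)+1-σ))^i * ((2:ℝ)^(s-σ))^j) := by
          rw [realcomp]
  -- null complement
  set T : Set (H n) := ⋃ p : ℕ × ℕ, A p.1 p.2 with hT
  have hTmeas : MeasurableSet T := MeasurableSet.iUnion fun p => hAmeas p.1 p.2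
  have hTc_null : μ Tᶜ = 0 := by
    have hsub2 : Tᶜ ⊆ {q : H n | 1 < dE q 0} ∪
        (⋂ k : ℕ, {q : H n | ‖q.1‖ ≤ r (0+k) ∧ |q.2| ≤ r 0}) := by
      intro q hq
      by_cases hd : 1 < dE q 0
      · exact Or.inl hd
      · push_neg at hd
        right
        have hnq1 : nq q ≤ 1 := by rw [← hdE0]; exact hd
        have hζ0 : q.1 = 0 := by
          by_contra hz
          have hζpos : 0 < ‖q.1‖ := norm_pos_iff.mpr hz
          have hnqpos : 0 < nq q := lt_of_lt_of_le hζpos (hζ_le q)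
          obtain ⟨j₀, hj1, hj2⟩ := exists_dyadic_aux hnqpos
            (by simpa using hnq1 : nq q ≤ (2⁻¹:ℝ)^(0:ℕ))
          simp only [Nat.zero_add] at hj1 hj2
          obtain ⟨i₀, hi1, hi2⟩ := exists_dyadic_aux hζpos ((hζ_le q).trans hj2)
          exact hq (Set.mem_iUnion.mpr ⟨(i₀, j₀), hi1, hi2, hj1, hj2⟩)
        refine Set.mem_iInter.mpr fun k => ⟨?_, ?_⟩
        · rw [hζ0]
          simpa using (hrpos (0+k)).le
        · have := (hτ_le q).trans hnq1
          simpa [hr] using this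
    have hInull : μ (⋂ k : ℕ, {q : H n | ‖q.1‖ ≤ r (0+k) ∧ |q.2| ≤ r 0}) = 0 := by
      have hμk : ∀ k : ℕ, μ (⋂ k' : ℕ, {q : H n | ‖q.1‖ ≤ r (0+k') ∧ |q.2| ≤ r 0}) ≤
          ENNReal.ofReal ((2:ℝ)^(2+σ) * ((2:ℝ)^((1:ℝ)-σ))^k) := by
        intro k
        refine (measure_mono (Set.iInter_subset _ k)).trans ((hcyl k 0).trans ?_)
        apply ENNReal.ofReal_le_ofReal
        refine le_of_eq ?_
        simp only [hrw, two_npow_eq, two_mul_two_rpow, two_rpow_rpow, two_rpow_npow,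
          two_rpow_mul_two_rpow]
        congr 1
        push_cast
        ring
      have hρ1 : (2:ℝ)^((1:ℝ)-σ) < 1 :=
        Real.rpow_lt_one_of_one_lt_of_neg (by norm_num) (by push_cast at hσ; linarith)
      have hρ0 : (0:ℝ) ≤ (2:ℝ)^((1:ℝ)-σ) := (Real.rpow_pos_of_pos (by norm_num) _).le
      have htendR : Filter.Tendsto (fun k : ℕ => (2:ℝ)^(2+σ) * ((2:ℝ)^((1:ℝ)-σ))^k)
          Filter.atTop (nhds 0) := by
        have := tendsto_pow_atTop_nhds_zero_of_lt_one hρ0 hρ1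
        simpa using this.const_mul ((2:ℝ)^(2+σ))
      have htend : Filter.Tendsto
          (fun k : ℕ => ENNReal.ofReal ((2:ℝ)^(2+σ) * ((2:ℝ)^((1:ℝ)-σ))^k))
          Filter.atTop (nhds 0) := by
        have := (ENNReal.continuous_ofReal.tendsto 0).comp htendR
        simpa [Function.comp_def] using this
      exact le_antisymm (ge_of_tendsto' htend hμk) (by positivity)
    refine nonpos_iff_eq_zero.mp ?_
    calc μ Tᶜ ≤ μ ({q : H n | 1 < dE q 0} ∪
          (⋂ k : ℕ, {q : H n | ‖q.1‖ ≤ r (0+k) ∧ |q.2| ≤ r 0})) := measure_mono hsub2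
      _ ≤ μ {q : H n | 1 < dE q 0} +
          μ (⋂ k : ℕ, {q : H n | ‖q.1‖ ≤ r (0+k) ∧ |q.2| ≤ r 0}) := measure_union_le _ _
      _ ≤ 0 := by rw [hsupp, hInull, add_zero]
  -- assemble
  have h1 : ∫⁻ q, f q ∂μ = ∫⁻ q in T, f q ∂μ := by
    rw [← lintegral_add_compl f hTmeas, setLIntegral_measure_zero _ _ hTc_null, add_zero]
  rw [h1]
  have h2 : ∫⁻ q in T, f q ∂μ ≤ ∑' p : ℕ × ℕ, ∫⁻ q in A p.1 p.2, f q ∂μ :=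
    lintegral_iUnion_le _ _
  have h3 : ∑' p : ℕ × ℕ, ∫⁻ q in A p.1 p.2, f q ∂μ ≤
      ∑' p : ℕ × ℕ, ENNReal.ofReal (2^(s+σ+2) * ((2:ℝ)^((m:ℝ)+1-σ))^p.1 * ((2:ℝ)^(s-σ))^p.2) :=
    ENNReal.tsum_le_tsum fun p => key p.1 p.2
  refine lt_of_le_of_lt (h2.trans h3) ?_
  -- geometric series
  have ha1 : (2:ℝ)^((m:ℝ)+1-σ) < 1 :=
    Real.rpow_lt_one_of_one_lt_of_neg (by norm_num) (by linarith)
  have hb1 : (2:ℝ)^(s-σ) < 1 :=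
    Real.rpow_lt_one_of_one_lt_of_neg (by norm_num) (by linarith)
  have ha0 : (0:ℝ) ≤ (2:ℝ)^((m:ℝ)+1-σ) := (Real.rpow_pos_of_pos (by norm_num) _).le
  have hb0 : (0:ℝ) ≤ (2:ℝ)^(s-σ) := (Real.rpow_pos_of_pos (by norm_num) _).le
  have heq : ∀ p : ℕ × ℕ, ENNReal.ofReal (2^(s+σ+2) * ((2:ℝ)^((m:ℝ)+1-σ))^p.1 * ((2:ℝ)^(s-σ))^p.2)
      = ENNReal.ofReal ((2:ℝ)^(s+σ+2)) * (ENNReal.ofReal ((2:ℝ)^((m:ℝ)+1-σ)))^p.1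
        * (ENNReal.ofReal ((2:ℝ)^(s-σ)))^p.2 := by
    intro p
    rw [ENNReal.ofReal_mul (by positivity), ENNReal.ofReal_mul (by positivity),
      ENNReal.ofReal_pow ha0, ENNReal.ofReal_pow hb0]
  calc ∑' p : ℕ × ℕ, ENNReal.ofReal (2^(s+σ+2) * ((2:ℝ)^((m:ℝ)+1-σ))^p.1 * ((2:ℝ)^(s-σ))^p.2)
      = ∑' (i : ℕ) (j : ℕ), ENNReal.ofReal ((2:ℝ)^(s+σ+2)) *
          (ENNReal.ofReal ((2:ℝ)^((m:ℝ)+1-σ)))^i * (ENNReal.ofReal ((2:ℝ)^(s-σ)))^j :=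
        (tsum_congr heq).trans (ENNReal.tsum_prod (f := fun i j =>
          ENNReal.ofReal ((2:ℝ)^(s+σ+2)) * (ENNReal.ofReal ((2:ℝ)^((m:ℝ)+1-σ)))^i
            * (ENNReal.ofReal ((2:ℝ)^(s-σ)))^j))
    _ = ENNReal.ofReal ((2:ℝ)^(s+σ+2)) * (1 - ENNReal.ofReal ((2:ℝ)^((m:ℝ)+1-σ)))⁻¹
          * (1 - ENNReal.ofReal ((2:ℝ)^(s-σ)))⁻¹ := by
        simp_rw [ENNReal.tsum_mul_left, ENNReal.tsum_geometric, ENNReal.tsum_mul_right,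
          ENNReal.tsum_mul_left, ENNReal.tsum_geometric]
    _ < ⊤ := by
        refine ENNReal.mul_lt_top (ENNReal.mul_lt_top ENNReal.ofReal_lt_top ?_) ?_
        · simp [ENNReal.inv_lt_top, tsub_pos_iff_lt, ENNReal.ofReal_lt_one.mpr ha1]
        · simp [ENNReal.inv_lt_top, tsub_pos_iff_lt, ENNReal.ofReal_lt_one.mpr hb1]
end
end
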